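/- Suppose ŵ_u enforces v: both u and v have non-trivial open intervals, ŵ_u ∈ I_v, and there is a hyperedge S containing both such that v is leftmost in S, or u is leftmost in S and v is leftmost in S \ {u}. If additionally the true weight satisfies w_u ∈ I_v, then v is mandatory (every feasible query set contains v). -/
import Mathlib


open Finset

/-- Lower endpoint of vertex `v`'s interval after querying the set `Q`. -/
def qlo {V : Type*} [DecidableEq V] (L w : V → ℝ) (Q : Finset V) (v : V) : ℝ :=
  if v ∈ Q then w v else L v

/-- Upper endpoint of vertex `v`'s interval after querying the set `Q`. -/
def qhi {V : Type*} [DecidableEq V] (U w : V → ℝ) (Q : Finset V) (v : V) : ℝ :=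
  if v ∈ Q then w v else U v

/-- The query set `Q` suffices to orient the hyperedge `S`: some vertex of `S`
has its (updated) interval weakly below all other (updated) intervals of `S`. -/
def Solves {V : Type*} [DecidableEq V] (L U w : V → ℝ) (Q : Finset V) (S : Finset V) : Prop :=
  ∃ m ∈ S, ∀ u ∈ S, u ≠ m → qhi U w Q m ≤ qlo L w Q u

theorem stmt16 {V : Type*} [DecidableEq V] (L U w pw : V → ℝ)
    (hw : ∀ x : V, w x ∈ Set.Ioo (L x) (U x))
    (hpw : ∀ x : V, pw x ∈ Set.Ioo (L x) (U x))
    (E : Finset (Finset V)) (u v : V) (huv : u ≠ v)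
    (hnontrivu : L u < U u) (hnontrivv : L v < U v)
    (henf : pw u ∈ Set.Ioo (L v) (U v))
    (hS : ∃ S ∈ E, u ∈ S ∧ v ∈ S ∧
      ((∀ x ∈ S, L v ≤ L x) ∨
       ((∀ x ∈ S, L u ≤ L x) ∧ ∀ x ∈ S.erase u, L v ≤ L x)))
    (hwu : w u ∈ Set.Ioo (L v) (U v)) :
    ∀ Q : Finset V, (∀ S ∈ E, Solves L U w Q S) → v ∈ Q := by
  intro Q hQ
  by_contra hv
  obtain ⟨S, hSE, huS, hvS, hcase⟩ := hS
  obtain ⟨m, hmS, hm⟩ := hQ S hSE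
  have hqhiv : qhi U w Q v = U v := by simp [qhi, hv]
  have hqlov : qlo L w Q v = L v := by simp [qlo, hv]
  have hqlou : qlo L w Q u < U v := by
    unfold qlo; split
    · exact hwu.2
    · exact lt_trans (hw u).1 hwu.2
  have hqhi : ∀ x, L x < qhi U w Q x := by
    intro x; unfold qhi; split
    · exact (hw x).1
    · exact lt_trans (hw x).1 (hw x).2
  by_cases hmv : m = v
  · subst hmv
    have h := hm u huS huv
    rw [hqhiv] at h
    exact absurd h (not_le.2 hqlou)
  · have h1 := hm v hvS (Ne.symm hmv)
    rw [hqlov] at h1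
    rcases hcase with h | ⟨hu2, hv2⟩
    · exact absurd h1 (not_le.2 (lt_of_le_of_lt (h m hmS) (hqhi m)))
    · by_cases hmu : m = u
      · subst hmu
        have hlt : L v < qhi U w Q m := by
          unfold qhi; split
          · exact hwu.1
          · exact lt_trans hwu.1 (hw m).2
        exact absurd h1 (not_le.2 hlt)
      · have hmS' : m ∈ S.erase u := Finset.mem_erase.2 ⟨hmu, hmS⟩
        exact absurd h1 (not_le.2 (lt_of_le_of_lt (hv2 m hmS') (hqhi m)))
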